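/- arXiv:2102.03282 — 2 statements merged into one kernel-verified Lean document; each statement's English description precedes it below -/
import Mathlib

section
/- (Gaussian version of Theorem 2.) Let m ≥ 1, k ≥ 0, let G₀, G₁, …, G_k be nonempty bounded subsets of ℝ^m, and let γ ≥ 0 satisfy G_{j+1} ⊆ (1+γ)·conv(G_j) + (−γ)·conv(G_j) for every 0 ≤ j < k (Minkowski sum). Suppose moreover that γ' ≥ 0 satisfies G_k ⊆ (1+γ')·conv(G₀) + (−γ')·conv(G₀). Then Ĝ(G_k) ≤ min{(1+2γ)^k, 1+2γ'}·Ĝ(G₀). -/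
open Finset MeasureTheory ProbabilityTheory
open scoped Pointwise

/-- The empirical Gaussian complexity of a set `A ⊆ ℝ^m`. -/
noncomputable def gaussComp (m : ℕ) (A : Set (Fin m → ℝ)) : ℝ :=
  ∫ g, sSup ((fun v => (1 / (m : ℝ)) * ∑ i, g i * v i) '' A)
    ∂(Measure.pi fun _ : Fin m => gaussianReal 0 1)

namespace GaussCompAux

open Real

variable {m : ℕ}

/-- The sup functional. -/
noncomputable def Hsup (m : ℕ) (A : Set (Fin m → ℝ)) (g : Fin m → ℝ) : ℝ :=
  sSup ((fun v => (1 / (m : ℝ)) * ∑ i, g i * v i) '' A)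

/-- The product Gaussian measure. -/
noncomputable def μm (m : ℕ) : Measure (Fin m → ℝ) := Measure.pi fun _ : Fin m => gaussianReal 0 1

lemma gaussComp_eq (m : ℕ) (A : Set (Fin m → ℝ)) :
    gaussComp m A = ∫ g, Hsup m A g ∂(μm m) := rfl

lemma exists_bound {A : Set (Fin m → ℝ)} (hbd : Bornology.IsBounded A) :
    ∃ R : ℝ, 0 ≤ R ∧ ∀ v ∈ A, ∀ i, |v i| ≤ R := by
  obtain ⟨C, hC⟩ := (isBounded_iff_forall_norm_le).mp hbd
  refine ⟨max C 0, le_max_right _ _, fun v hv i => ?_⟩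
  calc |v i| = ‖v i‖ := (Real.norm_eq_abs _).symm
    _ ≤ ‖v‖ := norm_le_pi_norm v i
    _ ≤ max C 0 := (hC v hv).trans (le_max_left _ _)

lemma F_sub_le {A : Set (Fin m → ℝ)} {R : ℝ} (hR0 : 0 ≤ R)
    (hR : ∀ v ∈ A, ∀ i, |v i| ≤ R) {v : Fin m → ℝ} (hv : v ∈ A) (g g' : Fin m → ℝ) :
    (1 / (m : ℝ)) * ∑ i, g i * v i ≤
      (1 / (m : ℝ)) * ∑ i, g' i * v i + (1 / (m : ℝ)) * (R * ∑ i, |g i - g' i|) := by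
  have key : ∑ i, g i * v i ≤ ∑ i, g' i * v i + R * ∑ i, |g i - g' i| := by
    have h1 : ∑ i, g i * v i - ∑ i, g' i * v i = ∑ i, (g i - g' i) * v i := by
      rw [← Finset.sum_sub_distrib]
      exact Finset.sum_congr rfl fun i _ => by ring
    have h2 : ∑ i, (g i - g' i) * v i ≤ ∑ i, |g i - g' i| * R := by
      refine Finset.sum_le_sum fun i _ => ?_
      calc (g i - g' i) * v i ≤ |(g i - g' i) * v i| := le_abs_self _
        _ = |g i - g' i| * |v i| := abs_mul _ _
        _ ≤ |g i - g' i| * R := mul_le_mul_of_nonneg_left (hR v hv i) (abs_nonneg _)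
    have h3 : ∑ i, |g i - g' i| * R = R * ∑ i, |g i - g' i| := by
      rw [Finset.mul_sum]; exact Finset.sum_congr rfl fun i _ => mul_comm _ _
    linarith
  have hc : (0:ℝ) ≤ 1 / (m : ℝ) := by positivity
  nlinarith [mul_le_mul_of_nonneg_left key hc]

lemma bddAbove_image {A : Set (Fin m → ℝ)} {R : ℝ} (hR0 : 0 ≤ R)
    (hR : ∀ v ∈ A, ∀ i, |v i| ≤ R) (g : Fin m → ℝ) :
    BddAbove ((fun v => (1 / (m : ℝ)) * ∑ i, g i * v i) '' A) := by
  refine ⟨(1 / (m : ℝ)) * (R * ∑ i, |g i|), ?_⟩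
  rintro y ⟨v, hv, rfl⟩
  have := F_sub_le hR0 hR hv g 0
  simpa using this

lemma le_Hsup {A : Set (Fin m → ℝ)} {R : ℝ} (hR0 : 0 ≤ R)
    (hR : ∀ v ∈ A, ∀ i, |v i| ≤ R) (g : Fin m → ℝ) {v : Fin m → ℝ} (hv : v ∈ A) :
    (1 / (m : ℝ)) * ∑ i, g i * v i ≤ Hsup m A g :=
  le_csSup (bddAbove_image hR0 hR g) (Set.mem_image_of_mem _ hv)

lemma Hsup_lip {A : Set (Fin m → ℝ)} (hne : A.Nonempty) {R : ℝ} (hR0 : 0 ≤ R)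
    (hR : ∀ v ∈ A, ∀ i, |v i| ≤ R) (g g' : Fin m → ℝ) :
    Hsup m A g ≤ Hsup m A g' + (1 / (m : ℝ)) * (R * ∑ i, |g i - g' i|) := by
  refine csSup_le (hne.image _) ?_
  rintro y ⟨v, hv, rfl⟩
  exact (F_sub_le hR0 hR hv g g').trans (add_le_add_left (le_Hsup hR0 hR g' hv) _)

lemma Hsup_abs_sub {A : Set (Fin m → ℝ)} (hne : A.Nonempty) {R : ℝ} (hR0 : 0 ≤ R)
    (hR : ∀ v ∈ A, ∀ i, |v i| ≤ R) (g g' : Fin m → ℝ) :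
    |Hsup m A g - Hsup m A g'| ≤ (1 / (m : ℝ)) * (R * ∑ i, |g i - g' i|) := by
  have h1 := Hsup_lip hne hR0 hR g g'
  have h2 := Hsup_lip hne hR0 hR g' g
  have h3 : ∑ i, |g' i - g i| = ∑ i, |g i - g' i| :=
    Finset.sum_congr rfl fun i _ => abs_sub_comm _ _
  rw [h3] at h2
  rw [abs_sub_le_iff]
  constructor <;> linarith

lemma Hsup_continuous {A : Set (Fin m → ℝ)} (hne : A.Nonempty) {R : ℝ} (hR0 : 0 ≤ R)
    (hR : ∀ v ∈ A, ∀ i, |v i| ≤ R) : Continuous (Hsup m A) := by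
  refine (LipschitzWith.of_dist_le_mul (K := R.toNNReal) fun g g' => ?_).continuous
  rw [Real.dist_eq]
  have h1 := Hsup_abs_sub hne hR0 hR g g'
  have h2 : ∑ i, |g i - g' i| ≤ (m : ℝ) * dist g g' := by
    calc ∑ i, |g i - g' i| = ∑ i, dist (g i) (g' i) :=
          Finset.sum_congr rfl fun i _ => (Real.dist_eq _ _).symm
      _ ≤ ∑ _i : Fin m, dist g g' := Finset.sum_le_sum fun i _ => dist_le_pi_dist g g' i
      _ = (m : ℝ) * dist g g' := by simp [Finset.sum_const, mul_comm]
  have hm1 : (m : ℝ) * (1 / (m : ℝ)) ≤ 1 := by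
    rcases Nat.eq_zero_or_pos m with h | h
    · simp [h]
    · have : (0:ℝ) < m := by exact_mod_cast h
      rw [mul_one_div, div_self this.ne']
  have hd : (0:ℝ) ≤ dist g g' := dist_nonneg
  have hcoe : (R.toNNReal : ℝ) = R := Real.coe_toNNReal R hR0
  rw [hcoe]
  calc |Hsup m A g - Hsup m A g'| ≤ (1 / (m : ℝ)) * (R * ∑ i, |g i - g' i|) := h1
    _ ≤ (1 / (m : ℝ)) * (R * ((m : ℝ) * dist g g')) := by
        refine mul_le_mul_of_nonneg_left (mul_le_mul_of_nonneg_left h2 hR0) (by positivity)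
    _ = ((m : ℝ) * (1 / (m : ℝ))) * (R * dist g g') := by ring
    _ ≤ 1 * (R * dist g g') := mul_le_mul_of_nonneg_right hm1 (by positivity)
    _ = R * dist g g' := one_mul _

instance : IsProbabilityMeasure (μm m) := by
  unfold μm; infer_instance

lemma map_eval_pi (i : Fin m) : Measure.map (Function.eval i) (μm m) = gaussianReal 0 1 := by
  classical
  ext s hs
  rw [μm, Measure.map_apply (measurable_pi_apply i) hs, Set.eval_preimage, Measure.pi_pi]
  rw [Finset.prod_eq_single i (fun j _ hj => by simp [Function.update_of_ne hj]) (by simp)]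
  simp

lemma integrable_abs_gauss : Integrable (fun x : ℝ => |x|) (gaussianReal 0 1) := by
  rw [gaussianReal_of_var_ne_zero 0 one_ne_zero]
  rw [integrable_withDensity_iff (measurable_gaussianPDF 0 1)
    (Filter.Eventually.of_forall fun x => ENNReal.ofReal_lt_top)]
  have key : Integrable (fun x : ℝ => |x| * rexp (-(1/2) * x ^ 2)) := by
    have h := (integrable_mul_exp_neg_mul_sq (b := 1/2) (by norm_num)).abs
    refine h.congr (Filter.Eventually.of_forall fun x => ?_)
    simp only
    rw [abs_mul, abs_of_pos (exp_pos _)]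
  have h2 : Integrable
      (fun x : ℝ => (√(2 * π * ((1:NNReal):ℝ)))⁻¹ * (|x| * rexp (-(1/2) * x ^ 2))) :=
    key.const_mul _
  refine h2.congr (Filter.Eventually.of_forall fun x => ?_)
  simp only
  rw [show ((gaussianPDF 0 1 x).toReal) = gaussianPDFReal 0 1 x from
    ENNReal.toReal_ofReal (gaussianPDFReal_nonneg 0 1 x), gaussianPDFReal]
  have he : -(x - 0) ^ 2 / (2 * ((1:NNReal):ℝ)) = -(1/2) * x ^ 2 := by push_cast; ring
  rw [he]; ring

lemma integrable_absSum : Integrable (fun g : Fin m → ℝ => ∑ i, |g i|) (μm m) := by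
  refine integrable_finset_sum _ fun i _ => ?_
  have hpres : MeasurePreserving (Function.eval i) (μm m) (gaussianReal 0 1) :=
    ⟨measurable_pi_apply i, map_eval_pi i⟩
  exact (hpres.integrable_comp continuous_abs.aestronglyMeasurable).mpr integrable_abs_gauss

lemma integrable_Hsup {A : Set (Fin m → ℝ)} (hne : A.Nonempty) {R : ℝ} (hR0 : 0 ≤ R)
    (hR : ∀ v ∈ A, ∀ i, |v i| ≤ R) : Integrable (Hsup m A) (μm m) := by
  refine Integrable.mono'
    (g := fun g => |Hsup m A 0| + (1 / (m : ℝ)) * (R * ∑ i, |g i|))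
    ((integrable_const _).add ((integrable_absSum.const_mul R).const_mul (1 / (m : ℝ))))
    (Hsup_continuous hne hR0 hR).aestronglyMeasurable
    (Filter.Eventually.of_forall fun g => ?_)
  have h1 := Hsup_abs_sub hne hR0 hR g 0
  simp only [sub_zero, Pi.zero_apply] at h1
  have h2 : |Hsup m A g| ≤ |Hsup m A g - Hsup m A 0| + |Hsup m A 0| := by
    calc |Hsup m A g| = |Hsup m A g - Hsup m A 0 + Hsup m A 0| := by ring_nf
      _ ≤ |Hsup m A g - Hsup m A 0| + |Hsup m A 0| := abs_add_le _ _
  rw [Real.norm_eq_abs]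
  linarith

lemma neg_measurePreserving : MeasurePreserving (fun g : Fin m → ℝ => -g) (μm m) (μm m) := by
  have h1 : MeasurePreserving (fun x : ℝ => -x) (gaussianReal 0 1) (gaussianReal 0 1) := by
    constructor
    · exact measurable_neg
    · rw [show (fun x : ℝ => -x) = fun x => (-1 : ℝ) * x from
        funext fun x => (neg_one_mul x).symm]
      rw [gaussianReal_map_const_mul]
      norm_num
  exact measurePreserving_pi _ _ fun _ : Fin m => h1

lemma integrable_Hsup_neg {A : Set (Fin m → ℝ)} (hne : A.Nonempty) {R : ℝ} (hR0 : 0 ≤ R)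
    (hR : ∀ v ∈ A, ∀ i, |v i| ≤ R) : Integrable (fun g => Hsup m A (-g)) (μm m) :=
  (neg_measurePreserving.integrable_comp
    (Hsup_continuous hne hR0 hR).aestronglyMeasurable).mpr (integrable_Hsup hne hR0 hR)

lemma integral_Hsup_neg {A : Set (Fin m → ℝ)} (hne : A.Nonempty) {R : ℝ} (hR0 : 0 ≤ R)
    (hR : ∀ v ∈ A, ∀ i, |v i| ≤ R) :
    ∫ g, Hsup m A (-g) ∂(μm m) = ∫ g, Hsup m A g ∂(μm m) := by
  conv_rhs => rw [← neg_measurePreserving (m := m) |>.map_eq]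
  rw [integral_map neg_measurePreserving.measurable.aemeasurable
    (by rw [neg_measurePreserving.map_eq]
        exact (Hsup_continuous hne hR0 hR).aestronglyMeasurable)]

lemma isLinearMap_F (g : Fin m → ℝ) :
    IsLinearMap ℝ (fun v : Fin m → ℝ => (1 / (m : ℝ)) * ∑ i, g i * v i) := by
  constructor
  · intro v w
    simp only [Pi.add_apply, mul_add, Finset.sum_add_distrib]
  · intro c v
    simp only [Pi.smul_apply, smul_eq_mul]
    rw [show ∑ i, g i * (c * v i) = c * ∑ i, g i * v i by
      rw [Finset.mul_sum]; exact Finset.sum_congr rfl fun i _ => by ring]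
    ring

lemma Hsup_convexHull_le {A : Set (Fin m → ℝ)} {R : ℝ} (hR0 : 0 ≤ R)
    (hR : ∀ v ∈ A, ∀ i, |v i| ≤ R) (g : Fin m → ℝ) {u : Fin m → ℝ}
    (hu : u ∈ convexHull ℝ A) :
    (1 / (m : ℝ)) * ∑ i, g i * u i ≤ Hsup m A g := by
  have hsub : convexHull ℝ A ⊆
      {x : Fin m → ℝ | (1 / (m : ℝ)) * ∑ i, g i * x i ≤ Hsup m A g} :=
    convexHull_min (fun a ha => le_Hsup hR0 hR g ha) (convex_halfSpace_le (isLinearMap_F g) _)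
  exact hsub hu

lemma Hsup_subset_le {A B : Set (Fin m → ℝ)} (hBne : B.Nonempty) {R : ℝ} (hR0 : 0 ≤ R)
    (hR : ∀ v ∈ A, ∀ i, |v i| ≤ R) {γ : ℝ} (hγ : 0 ≤ γ)
    (hsub : B ⊆ (1 + γ) • convexHull ℝ A + (-γ) • convexHull ℝ A) (g : Fin m → ℝ) :
    Hsup m B g ≤ (1 + γ) * Hsup m A g + γ * Hsup m A (-g) := by
  refine csSup_le (hBne.image _) ?_
  rintro y ⟨b, hb, rfl⟩
  obtain ⟨p, hp, q, hq, rfl⟩ := hsub hb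
  obtain ⟨u, hu, rfl⟩ := hp
  obtain ⟨u', hu', rfl⟩ := hq
  have expand : (1 / (m : ℝ)) * ∑ i, g i * (((1 + γ) • u + (-γ) • u') i)
      = (1 + γ) * ((1 / (m : ℝ)) * ∑ i, g i * u i)
        + γ * ((1 / (m : ℝ)) * ∑ i, (-g) i * u' i) := by
    simp only [Pi.add_apply, Pi.smul_apply, smul_eq_mul, Pi.neg_apply]
    rw [show ∑ i, g i * ((1 + γ) * u i + -γ * u' i)
        = ∑ i, ((1 + γ) * (g i * u i) + γ * (-g i * u' i)) from
      Finset.sum_congr rfl fun i _ => by ring]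
    rw [Finset.sum_add_distrib, ← Finset.mul_sum, ← Finset.mul_sum]
    ring
  simp only
  rw [expand]
  have h1 : (1 / (m : ℝ)) * ∑ i, g i * u i ≤ Hsup m A g :=
    Hsup_convexHull_le hR0 hR g hu
  have h2 : (1 / (m : ℝ)) * ∑ i, (-g) i * u' i ≤ Hsup m A (-g) :=
    Hsup_convexHull_le hR0 hR (-g) hu'
  have hγ1 : (0:ℝ) ≤ 1 + γ := by linarith
  exact add_le_add (mul_le_mul_of_nonneg_left h1 hγ1) (mul_le_mul_of_nonneg_left h2 hγ)

lemma gaussComp_step {A B : Set (Fin m → ℝ)} (hAne : A.Nonempty)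
    (hAbd : Bornology.IsBounded A) (hBne : B.Nonempty) (hBbd : Bornology.IsBounded B)
    {γ : ℝ} (hγ : 0 ≤ γ)
    (hsub : B ⊆ (1 + γ) • convexHull ℝ A + (-γ) • convexHull ℝ A) :
    gaussComp m B ≤ (1 + 2 * γ) * gaussComp m A := by
  obtain ⟨R, hR0, hR⟩ := exists_bound hAbd
  obtain ⟨R', hR0', hR'⟩ := exists_bound hBbd
  have hintA := integrable_Hsup hAne hR0 hR
  have hintAneg := integrable_Hsup_neg hAne hR0 hR
  have hintB := integrable_Hsup hBne hR0' hR'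
  have step1 : gaussComp m B ≤
      ∫ g, ((1 + γ) * Hsup m A g + γ * Hsup m A (-g)) ∂(μm m) := by
    rw [gaussComp_eq]
    exact integral_mono hintB ((hintA.const_mul _).add (hintAneg.const_mul _))
      (Hsup_subset_le hBne hR0 hR hγ hsub)
  have step2 : ∫ g, ((1 + γ) * Hsup m A g + γ * Hsup m A (-g)) ∂(μm m)
      = (1 + 2 * γ) * gaussComp m A := by
    rw [integral_add (hintA.const_mul _) (hintAneg.const_mul _),
      integral_const_mul, integral_const_mul, integral_Hsup_neg hAne hR0 hR,
      gaussComp_eq]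
    ring
  calc gaussComp m B ≤ _ := step1
    _ = _ := step2

lemma gaussComp_nonneg {A : Set (Fin m → ℝ)} (hAne : A.Nonempty)
    (hAbd : Bornology.IsBounded A) : 0 ≤ gaussComp m A := by
  obtain ⟨R, hR0, hR⟩ := exists_bound hAbd
  obtain ⟨a, ha⟩ := id hAne
  have hintA := integrable_Hsup hAne hR0 hR
  have hintAneg := integrable_Hsup_neg hAne hR0 hR
  have key : 0 ≤ ∫ g, (Hsup m A g + Hsup m A (-g)) ∂(μm m) := by
    refine integral_nonneg fun g => ?_
    show (0:ℝ) ≤ Hsup m A g + Hsup m A (-g)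
    have h1 : (1 / (m : ℝ)) * ∑ i, g i * a i ≤ Hsup m A g := le_Hsup hR0 hR g ha
    have h2 : (1 / (m : ℝ)) * ∑ i, (-g) i * a i ≤ Hsup m A (-g) := le_Hsup hR0 hR (-g) ha
    have h3 : (1 / (m : ℝ)) * ∑ i, (-g) i * a i = -((1 / (m : ℝ)) * ∑ i, g i * a i) := by
      simp only [Pi.neg_apply]
      rw [show ∑ i, -g i * a i = -∑ i, g i * a i by
        rw [← Finset.sum_neg_distrib]; exact Finset.sum_congr rfl fun i _ => by ring]
      ring
    rw [h3] at h2
    linarith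
  rw [integral_add hintA hintAneg, integral_Hsup_neg hAne hR0 hR] at key
  rw [gaussComp_eq]
  linarith

end GaussCompAux

open GaussCompAux

theorem stmt17 (m : ℕ) (hm : 1 ≤ m) (k : ℕ) (G : ℕ → Set (Fin m → ℝ))
    (hne : ∀ j ≤ k, (G j).Nonempty) (hbd : ∀ j ≤ k, Bornology.IsBounded (G j))
    (γ : ℝ) (hγ : 0 ≤ γ)
    (hstep : ∀ j < k,
      G (j + 1) ⊆ (1 + γ) • convexHull ℝ (G j) + (-γ) • convexHull ℝ (G j))
    (γ' : ℝ) (hγ' : 0 ≤ γ')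
    (hmax : G k ⊆ (1 + γ') • convexHull ℝ (G 0) + (-γ') • convexHull ℝ (G 0)) :
    gaussComp m (G k) ≤ min ((1 + 2 * γ) ^ k) (1 + 2 * γ') * gaussComp m (G 0) := by
  have h0ne := hne 0 k.zero_le
  have h0bd := hbd 0 k.zero_le
  have claim : ∀ j, j ≤ k → gaussComp m (G j) ≤ (1 + 2 * γ) ^ j * gaussComp m (G 0) := by
    intro j
    induction j with
    | zero => intro _; simp
    | succ n ih =>
      intro hjk
      have hnk : n < k := lt_of_lt_of_le (Nat.lt_succ_self n) hjk
      have hstep' := gaussComp_step (hne n hnk.le) (hbd n hnk.le) (hne (n+1) hjk)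
        (hbd (n+1) hjk) hγ (hstep n hnk)
      have hih := ih hnk.le
      calc gaussComp m (G (n + 1)) ≤ (1 + 2 * γ) * gaussComp m (G n) := hstep'
        _ ≤ (1 + 2 * γ) * ((1 + 2 * γ) ^ n * gaussComp m (G 0)) :=
            mul_le_mul_of_nonneg_left hih (by linarith)
        _ = (1 + 2 * γ) ^ (n + 1) * gaussComp m (G 0) := by rw [pow_succ]; ring
  have h1 := claim k le_rfl
  have h2 := gaussComp_step h0ne h0bd (hne k le_rfl) (hbd k le_rfl) hγ' hmax
  rcases le_total ((1 + 2 * γ) ^ k) (1 + 2 * γ') with h | h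
  · rw [min_eq_left h]; exact h1
  · rw [min_eq_right h]; exact h2
end

section
/- (Absolute-value versions of the complexity bounds.) Let m ≥ 1, k ≥ 0, let G₀, G₁, …, G_k be nonempty bounded subsets of ℝ^m with G₀ ⊆ G_k, and let γ ≥ 0 satisfy G_{j+1} ⊆ (1+γ)·conv(G_j) + (−γ)·conv(G_j) for every 0 ≤ j < k (Minkowski sum). Suppose moreover that γ' ≥ 0 satisfies G_k ⊆ (1+γ')·conv(G₀) + (−γ')·conv(G₀), and set γ* := min{(1+2γ)^k, 1+2γ'}. Then R̄(G₀) ≤ R̄(G_k) ≤ γ*·R̄(G₀) and Ḡ(G₀) ≤ Ḡ(G_k) ≤ γ*·Ḡ(G₀). -/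
open Finset MeasureTheory ProbabilityTheory
open scoped Pointwise

/-- Absolute-value empirical Rademacher complexity:
`R̄(A) = 2^{-m} · Σ_{ε ∈ {-1,1}^m} sup_{v ∈ A} |(1/m) Σ_i ε_i v_i|`. -/
noncomputable def radCompAbs (m : ℕ) (A : Set (Fin m → ℝ)) : ℝ :=
  ((2 : ℝ) ^ m)⁻¹ * ∑ ε : Fin m → Bool,
    sSup ((fun v => |(1 / (m : ℝ)) * ∑ i, (if ε i then (1 : ℝ) else -1) * v i|) '' A)

/-- Absolute-value empirical Gaussian complexity:
`Ḡ(A) = E_{g ∼ N(0,1)^m}[sup_{v ∈ A} |(1/m) Σ_i g_i v_i|]`. -/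
noncomputable def gaussCompAbs (m : ℕ) (A : Set (Fin m → ℝ)) : ℝ :=
  ∫ g, sSup ((fun v => |(1 / (m : ℝ)) * ∑ i, g i * v i|) '' A)
    ∂(Measure.pi fun _ : Fin m => gaussianReal 0 1)

/-- Auxiliary: the sup of `|(1/m)·⟨w,v⟩|` over `v ∈ A`. -/
noncomputable def Sf (m : ℕ) (w : Fin m → ℝ) (A : Set (Fin m → ℝ)) : ℝ :=
  sSup ((fun v => |(1 / (m : ℝ)) * ∑ i, w i * v i|) '' A)

lemma f_le {m : ℕ} (w v : Fin m → ℝ) {C : ℝ} (hv : ∀ i, |v i| ≤ C) :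
    |(1 / (m : ℝ)) * ∑ i, w i * v i| ≤ (1 / (m : ℝ)) * ((∑ i, |w i|) * C) := by
  rw [abs_mul, abs_of_nonneg (by positivity : (0:ℝ) ≤ 1 / (m:ℝ))]
  refine mul_le_mul_of_nonneg_left ?_ (by positivity)
  calc |∑ i, w i * v i| ≤ ∑ i, |w i * v i| := Finset.abs_sum_le_sum_abs _ _
    _ = ∑ i, |w i| * |v i| := by simp [abs_mul]
    _ ≤ ∑ i, |w i| * C :=
        Finset.sum_le_sum fun i _ => mul_le_mul_of_nonneg_left (hv i) (abs_nonneg _)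
    _ = (∑ i, |w i|) * C := (Finset.sum_mul _ _ _).symm

lemma exists_bound {m : ℕ} {A : Set (Fin m → ℝ)} (h : Bornology.IsBounded A) :
    ∃ C : ℝ, 0 ≤ C ∧ ∀ v ∈ A, ∀ i, |v i| ≤ C := by
  obtain ⟨C, hC⟩ := isBounded_iff_forall_norm_le.mp h
  exact ⟨max C 0, le_max_right _ _, fun v hv i =>
    le_trans (le_trans (norm_le_pi_norm v i) (hC v hv)) (le_max_left _ _)⟩

lemma Sf_bddAbove' {m : ℕ} (w : Fin m → ℝ) {A : Set (Fin m → ℝ)} {C : ℝ}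
    (hC : ∀ v ∈ A, ∀ i, |v i| ≤ C) :
    BddAbove ((fun v => |(1 / (m : ℝ)) * ∑ i, w i * v i|) '' A) :=
  ⟨(1 / (m : ℝ)) * ((∑ i, |w i|) * C), by
    rintro x ⟨v, hv, rfl⟩; exact f_le w v (hC v hv)⟩

lemma Sf_bddAbove {m : ℕ} (w : Fin m → ℝ) {A : Set (Fin m → ℝ)} (h : Bornology.IsBounded A) :
    BddAbove ((fun v => |(1 / (m : ℝ)) * ∑ i, w i * v i|) '' A) := by
  obtain ⟨C, _, hC⟩ := exists_bound h
  exact Sf_bddAbove' w hC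

lemma Sf_nonneg {m : ℕ} (w : Fin m → ℝ) {A : Set (Fin m → ℝ)} (hA : A.Nonempty)
    (h : Bornology.IsBounded A) : 0 ≤ Sf m w A := by
  obtain ⟨v, hv⟩ := hA
  exact le_trans (abs_nonneg _) (le_csSup (Sf_bddAbove w h) ⟨v, hv, rfl⟩)

lemma Sf_mono {m : ℕ} (w : Fin m → ℝ) {A B : Set (Fin m → ℝ)} (hA : A.Nonempty)
    (hAB : A ⊆ B) (hB : Bornology.IsBounded B) : Sf m w A ≤ Sf m w B :=
  csSup_le_csSup (Sf_bddAbove w hB) (hA.image _) (Set.image_mono hAB)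

lemma lin_combo {m : ℕ} (w v1 v2 : Fin m → ℝ) (a b : ℝ) :
    (1 / (m : ℝ)) * ∑ i, w i * (a • v1 + b • v2) i
      = a * ((1 / (m : ℝ)) * ∑ i, w i * v1 i) + b * ((1 / (m : ℝ)) * ∑ i, w i * v2 i) := by
  calc (1 / (m : ℝ)) * ∑ i, w i * (a • v1 + b • v2) i
      = ∑ i, (a * ((1 / (m : ℝ)) * (w i * v1 i)) + b * ((1 / (m : ℝ)) * (w i * v2 i))) := by
        rw [Finset.mul_sum]
        exact Finset.sum_congr rfl fun i _ => by
          simp only [Pi.add_apply, Pi.smul_apply, smul_eq_mul]; ring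
    _ = (∑ i, a * ((1 / (m : ℝ)) * (w i * v1 i)))
          + ∑ i, b * ((1 / (m : ℝ)) * (w i * v2 i)) := Finset.sum_add_distrib
    _ = a * ((1 / (m : ℝ)) * ∑ i, w i * v1 i) + b * ((1 / (m : ℝ)) * ∑ i, w i * v2 i) := by
        simp only [← Finset.mul_sum]

lemma Sf_hull {m : ℕ} (w : Fin m → ℝ) {A : Set (Fin m → ℝ)} (h : Bornology.IsBounded A) :
    ∀ v ∈ convexHull ℝ A, |(1 / (m : ℝ)) * ∑ i, w i * v i| ≤ Sf m w A := by
  intro v hv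
  have hconv : Convex ℝ {v : Fin m → ℝ | |(1 / (m : ℝ)) * ∑ i, w i * v i| ≤ Sf m w A} := by
    intro v1 h1 v2 h2 a b ha hb hab
    simp only [Set.mem_setOf_eq] at h1 h2 ⊢
    rw [lin_combo]
    calc |a * ((1 / (m : ℝ)) * ∑ i, w i * v1 i) + b * ((1 / (m : ℝ)) * ∑ i, w i * v2 i)|
        ≤ |a * ((1 / (m : ℝ)) * ∑ i, w i * v1 i)| + |b * ((1 / (m : ℝ)) * ∑ i, w i * v2 i)| :=
          abs_add_le _ _
      _ = a * |(1 / (m : ℝ)) * ∑ i, w i * v1 i| + b * |(1 / (m : ℝ)) * ∑ i, w i * v2 i| := by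
          simp only [abs_mul, abs_of_nonneg ha, abs_of_nonneg hb]
      _ ≤ a * Sf m w A + b * Sf m w A := by
          gcongr
      _ = Sf m w A := by rw [← add_mul, hab, one_mul]
  exact convexHull_min (fun b hb => le_csSup (Sf_bddAbove w h) ⟨b, hb, rfl⟩) hconv hv

lemma Sf_step {m : ℕ} (w : Fin m → ℝ) {A B : Set (Fin m → ℝ)} {c : ℝ} (hc : 0 ≤ c)
    (hA : A.Nonempty) (hB : B.Nonempty) (hBb : Bornology.IsBounded B)
    (hsub : A ⊆ (1 + c) • convexHull ℝ B + (-c) • convexHull ℝ B) :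
    Sf m w A ≤ (1 + 2 * c) * Sf m w B := by
  refine csSup_le (hA.image _) ?_
  rintro x ⟨v, hv, rfl⟩
  obtain ⟨x1, hx1, x2, hx2, rfl⟩ := hsub hv
  obtain ⟨b1, hb1, rfl⟩ := hx1
  obtain ⟨b2, hb2, rfl⟩ := hx2
  have key := lin_combo w b1 b2 (1 + c) (-c)
  have e1 := Sf_hull w hBb b1 hb1
  have e2 := Sf_hull w hBb b2 hb2
  have hS := Sf_nonneg w hB hBb
  calc |(1 / (m : ℝ)) * ∑ i, w i * ((1 + c) • b1 + (-c) • b2) i|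
      = |(1 + c) * ((1 / (m : ℝ)) * ∑ i, w i * b1 i)
          + (-c) * ((1 / (m : ℝ)) * ∑ i, w i * b2 i)| := by rw [key]
    _ ≤ (1 + c) * |(1 / (m : ℝ)) * ∑ i, w i * b1 i|
          + c * |(1 / (m : ℝ)) * ∑ i, w i * b2 i| := by
        refine le_trans (abs_add_le _ _) ?_
        simp only [abs_mul, abs_neg, abs_of_nonneg hc,
          abs_of_nonneg (show (0:ℝ) ≤ 1 + c by linarith)]
        try exact le_rfl
    _ ≤ (1 + c) * Sf m w B + c * Sf m w B := by gcongr <;> linarith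
    _ = (1 + 2 * c) * Sf m w B := by ring

lemma Sf_claim {m : ℕ} (hm : 1 ≤ m) {A : Set (Fin m → ℝ)} {C : ℝ}
    (hA : A.Nonempty) (hC : ∀ v ∈ A, ∀ i, |v i| ≤ C) (hC0 : 0 ≤ C) (w w' : Fin m → ℝ) :
    Sf m w A ≤ Sf m w' A + C * dist w w' := by
  have hm0 : (m : ℝ) ≠ 0 := Nat.cast_ne_zero.mpr (by omega)
  refine csSup_le (hA.image _) ?_
  rintro x ⟨v, hv, rfl⟩
  have h1 : |(1 / (m : ℝ)) * ∑ i, w i * v i|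
      ≤ |(1 / (m : ℝ)) * ∑ i, w' i * v i| + |(1 / (m : ℝ)) * ∑ i, (w i - w' i) * v i| := by
    have he : (1 / (m : ℝ)) * ∑ i, w i * v i
        = (1 / (m : ℝ)) * ∑ i, w' i * v i + (1 / (m : ℝ)) * ∑ i, (w i - w' i) * v i := by
      rw [← mul_add, ← Finset.sum_add_distrib]
      congr 1
      exact Finset.sum_congr rfl fun i _ => by ring
    rw [he]; exact abs_add_le _ _
  have h2 : |(1 / (m : ℝ)) * ∑ i, (w i - w' i) * v i|
      ≤ (1 / (m : ℝ)) * ((∑ i, |w i - w' i|) * C) := f_le _ v (hC v hv)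
  have h3 : (1 / (m : ℝ)) * ((∑ i, |w i - w' i|) * C) ≤ C * dist w w' := by
    have hs : (∑ i, |w i - w' i|) ≤ (m : ℝ) * dist w w' := by
      calc (∑ i, |w i - w' i|) ≤ ∑ _i : Fin m, dist w w' :=
            Finset.sum_le_sum fun i _ => by
              rw [← Real.dist_eq]; exact dist_le_pi_dist w w' i
        _ = (m : ℝ) * dist w w' := by simp [mul_comm]
    calc (1 / (m : ℝ)) * ((∑ i, |w i - w' i|) * C)
        ≤ (1 / (m : ℝ)) * (((m : ℝ) * dist w w') * C) := by
          refine mul_le_mul_of_nonneg_left (mul_le_mul_of_nonneg_right hs hC0) (by positivity)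
      _ = C * dist w w' := by field_simp
  have h4 : |(1 / (m : ℝ)) * ∑ i, w' i * v i| ≤ Sf m w' A :=
    le_csSup (Sf_bddAbove' w' hC) ⟨v, hv, rfl⟩
  linarith

lemma Sf_cont {m : ℕ} (hm : 1 ≤ m) {A : Set (Fin m → ℝ)} {C : ℝ}
    (hA : A.Nonempty) (hC : ∀ v ∈ A, ∀ i, |v i| ≤ C) (hC0 : 0 ≤ C) :
    Continuous fun w : Fin m → ℝ => Sf m w A := by
  refine (LipschitzWith.of_dist_le_mul (K := C.toNNReal) fun w w' => ?_).continuous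
  rw [Real.dist_eq, Real.coe_toNNReal C hC0, abs_sub_le_iff]
  constructor
  · have := Sf_claim hm hA hC hC0 w w'; linarith
  · have := Sf_claim hm hA hC hC0 w' w
    rw [dist_comm] at this; linarith

lemma pdfeq (x : ℝ) : gaussianPDFReal 0 1 x
    = (Real.sqrt (2 * Real.pi))⁻¹ * Real.exp (-(1/2 : ℝ) * x ^ 2) := by
  rw [gaussianPDFReal]
  norm_num
  ring_nf
  exact Or.inl trivial

lemma gauss_abs_int : Integrable (fun x : ℝ => |x|) (gaussianReal 0 1) := by
  rw [gaussianReal_of_var_ne_zero _ (by norm_num : (1 : NNReal) ≠ 0)]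
  rw [integrable_withDensity_iff (measurable_gaussianPDF _ _)
    (Filter.Eventually.of_forall fun x => ENNReal.ofReal_lt_top)]
  have h : Integrable (fun x : ℝ => x * Real.exp (-(1/2 : ℝ) * x ^ 2)) volume :=
    integrable_mul_exp_neg_mul_sq (by norm_num)
  refine (h.abs.const_mul ((Real.sqrt (2 * Real.pi))⁻¹)).mono'
    ?_ (Filter.Eventually.of_forall fun x => ?_)
  · exact (measurable_norm.mul ((measurable_gaussianPDF 0 1).ennreal_toReal)).aestronglyMeasurable
  · have hpdf : (gaussianPDF 0 1 x).toReal = gaussianPDFReal 0 1 x :=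
      ENNReal.toReal_ofReal (gaussianPDFReal_nonneg _ _ _)
    rw [Real.norm_eq_abs, abs_mul, abs_abs, hpdf, pdfeq]
    rw [abs_mul, abs_of_nonneg (Real.exp_nonneg _),
      abs_of_nonneg (by positivity : (0:ℝ) ≤ (Real.sqrt (2 * Real.pi))⁻¹), abs_mul,
      abs_of_nonneg (Real.exp_nonneg _)]
    ring_nf
    exact le_refl _

lemma map_eval (m : ℕ) (i : Fin m) :
    (Measure.pi fun _ : Fin m => gaussianReal 0 1).map (Function.eval i) = gaussianReal 0 1 := by
  ext s hs
  rw [Measure.map_apply (measurable_pi_apply i) hs, Set.eval_preimage, Measure.pi_pi]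
  rw [show (fun i_1 => (gaussianReal 0 1) (Function.update (fun _ : Fin m => Set.univ) i s i_1))
      = Function.update (fun _ : Fin m => (1 : ENNReal)) i ((gaussianReal 0 1) s) by
    ext j
    rcases eq_or_ne j i with rfl | hj
    · simp
    · simp [Function.update_of_ne hj]]
  rw [Finset.prod_update_of_mem (Finset.mem_univ i)]
  simp

lemma coord_int (m : ℕ) (i : Fin m) :
    Integrable (fun g : Fin m → ℝ => |g i|)
      (Measure.pi fun _ : Fin m => gaussianReal 0 1) := by
  have h' : Integrable (fun x : ℝ => |x|)
      ((Measure.pi fun _ : Fin m => gaussianReal 0 1).map (Function.eval i)) := by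
    rw [map_eval]; exact gauss_abs_int
  exact (integrable_map_measure h'.aestronglyMeasurable
    (measurable_pi_apply i).aemeasurable).mp h'

lemma Sf_integrable {m : ℕ} (hm : 1 ≤ m) {A : Set (Fin m → ℝ)} {C : ℝ}
    (hA : A.Nonempty) (hC : ∀ v ∈ A, ∀ i, |v i| ≤ C) (hC0 : 0 ≤ C) :
    Integrable (fun g : Fin m → ℝ => Sf m g A)
      (Measure.pi fun _ : Fin m => gaussianReal 0 1) := by
  have hint : Integrable (fun g : Fin m → ℝ => (1 / (m : ℝ)) * ((∑ i, |g i|) * C))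
      (Measure.pi fun _ : Fin m => gaussianReal 0 1) :=
    (((integrable_finset_sum Finset.univ fun i _ => coord_int m i).mul_const C).const_mul _)
  refine hint.mono' (Sf_cont hm hA hC hC0).aestronglyMeasurable
    (Filter.Eventually.of_forall fun g => ?_)
  have hS0 : 0 ≤ Sf m g A := by
    obtain ⟨v, hv⟩ := hA
    exact le_trans (abs_nonneg _) (le_csSup (Sf_bddAbove' g hC) ⟨v, hv, rfl⟩)
  rw [Real.norm_eq_abs, abs_of_nonneg hS0]
  refine csSup_le (hA.image _) ?_
  rintro x ⟨v, hv, rfl⟩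
  exact f_le g v (hC v hv)

theorem stmt19 (m : ℕ) (hm : 1 ≤ m) (k : ℕ) (G : ℕ → Set (Fin m → ℝ))
    (hne : ∀ j ≤ k, (G j).Nonempty) (hbd : ∀ j ≤ k, Bornology.IsBounded (G j))
    (hsub : G 0 ⊆ G k) (γ : ℝ) (hγ : 0 ≤ γ)
    (hstep : ∀ j < k,
      G (j + 1) ⊆ (1 + γ) • convexHull ℝ (G j) + (-γ) • convexHull ℝ (G j))
    (γ' : ℝ) (hγ' : 0 ≤ γ')
    (hmax : G k ⊆ (1 + γ') • convexHull ℝ (G 0) + (-γ') • convexHull ℝ (G 0))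
    (γs : ℝ) (hγs : γs = min ((1 + 2 * γ) ^ k) (1 + 2 * γ')) :
    (radCompAbs m (G 0) ≤ radCompAbs m (G k) ∧
        radCompAbs m (G k) ≤ γs * radCompAbs m (G 0)) ∧
      gaussCompAbs m (G 0) ≤ gaussCompAbs m (G k) ∧
        gaussCompAbs m (G k) ≤ γs * gaussCompAbs m (G 0) := by
  have h0k : (0 : ℕ) ≤ k := Nat.zero_le _
  have hne0 := hne 0 h0k
  have hnek := hne k le_rfl
  have hbd0 := hbd 0 h0k
  have hbdk := hbd k le_rfl
  -- pointwise monotonicity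
  have mono : ∀ w : Fin m → ℝ, Sf m w (G 0) ≤ Sf m w (G k) :=
    fun w => Sf_mono w hne0 hsub hbdk
  -- pointwise upper bound
  have key : ∀ w : Fin m → ℝ, Sf m w (G k) ≤ γs * Sf m w (G 0) := by
    intro w
    have hind : ∀ j, j ≤ k → Sf m w (G j) ≤ (1 + 2 * γ) ^ j * Sf m w (G 0) := by
      intro j
      induction j with
      | zero => intro _; simp
      | succ n ih =>
        intro hj
        have hn : n ≤ k := by omega
        have h1 : Sf m w (G (n + 1)) ≤ (1 + 2 * γ) * Sf m w (G n) :=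
          Sf_step w hγ (hne _ hj) (hne _ hn) (hbd _ hn) (hstep n (by omega))
        calc Sf m w (G (n + 1)) ≤ (1 + 2 * γ) * Sf m w (G n) := h1
          _ ≤ (1 + 2 * γ) * ((1 + 2 * γ) ^ n * Sf m w (G 0)) :=
              mul_le_mul_of_nonneg_left (ih hn) (by linarith)
          _ = (1 + 2 * γ) ^ (n + 1) * Sf m w (G 0) := by ring
    have h2 : Sf m w (G k) ≤ (1 + 2 * γ') * Sf m w (G 0) :=
      Sf_step w hγ' hnek hne0 hbd0 hmax
    have hS0 : 0 ≤ Sf m w (G 0) := Sf_nonneg w hne0 hbd0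
    rw [hγs, min_mul_of_nonneg _ _ hS0]
    exact le_min (hind k le_rfl) h2
  have hγs0 : 0 ≤ γs := by
    rw [hγs]
    exact le_min (by positivity) (by linarith)
  -- Rademacher part
  have hradeq : ∀ A : Set (Fin m → ℝ), radCompAbs m A
      = ((2 : ℝ) ^ m)⁻¹ * ∑ ε : Fin m → Bool, Sf m (fun i => if ε i then 1 else -1) A :=
    fun A => rfl
  have hrad1 : radCompAbs m (G 0) ≤ radCompAbs m (G k) := by
    rw [hradeq, hradeq]
    exact mul_le_mul_of_nonneg_left (Finset.sum_le_sum fun ε _ => mono _) (by positivity)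
  have hrad2 : radCompAbs m (G k) ≤ γs * radCompAbs m (G 0) := by
    rw [hradeq, hradeq]
    calc ((2 : ℝ) ^ m)⁻¹ * ∑ ε : Fin m → Bool, Sf m (fun i => if ε i then 1 else -1) (G k)
        ≤ ((2 : ℝ) ^ m)⁻¹ * ∑ ε : Fin m → Bool,
            γs * Sf m (fun i => if ε i then 1 else -1) (G 0) :=
          mul_le_mul_of_nonneg_left (Finset.sum_le_sum fun ε _ => key _) (by positivity)
      _ = γs * (((2 : ℝ) ^ m)⁻¹
            * ∑ ε : Fin m → Bool, Sf m (fun i => if ε i then 1 else -1) (G 0)) := by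
          rw [← Finset.mul_sum]; ring
  -- Gaussian part
  obtain ⟨C0, hC00, hC0⟩ := exists_bound hbd0
  obtain ⟨Ck, hCk0, hCk⟩ := exists_bound hbdk
  have hgaeq : ∀ A : Set (Fin m → ℝ), gaussCompAbs m A
      = ∫ g, Sf m g A ∂(Measure.pi fun _ : Fin m => gaussianReal 0 1) := fun A => rfl
  have hint0 := Sf_integrable hm hne0 hC0 hC00
  have hintk := Sf_integrable hm hnek hCk hCk0
  have hga1 : gaussCompAbs m (G 0) ≤ gaussCompAbs m (G k) := by
    rw [hgaeq, hgaeq]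
    exact integral_mono_of_nonneg
      (Filter.Eventually.of_forall fun g => Sf_nonneg g hne0 hbd0) hintk
      (Filter.Eventually.of_forall fun g => mono g)
  have hga2 : gaussCompAbs m (G k) ≤ γs * gaussCompAbs m (G 0) := by
    rw [hgaeq, hgaeq]
    calc (∫ g, Sf m g (G k) ∂(Measure.pi fun _ : Fin m => gaussianReal 0 1))
        ≤ ∫ g, γs * Sf m g (G 0) ∂(Measure.pi fun _ : Fin m => gaussianReal 0 1) :=
          integral_mono_of_nonneg
            (Filter.Eventually.of_forall fun g => Sf_nonneg g hnek hbdk)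
            (hint0.const_mul γs)
            (Filter.Eventually.of_forall fun g => key g)
      _ = γs * ∫ g, Sf m g (G 0) ∂(Measure.pi fun _ : Fin m => gaussianReal 0 1) :=
          integral_const_mul γs _
  exact ⟨⟨hrad1, hrad2⟩, hga1, hga2⟩
end
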